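/- Let n ≥ 0 and let f ∈ ℤ[t^{±1}, q^{±1}]. Then φ̃_b(f) is divisible by (q;q)_n in ℤ[q^{±1}] for every integer b if and only if f belongs to the ideal I_n of ℤ[t^{±1}, q^{±1}] generated by the elements c_{k,n} := (t;q)_k · (q^{k+1};q)_{n−k} for k = 0, 1, …, n. -/

import Mathlib

noncomputable section

open AddMonoidAlgebra

/-- The Laurent polynomial ring `ℤ[t^{±1}, q^{±1}]`, realized as the monoid algebra of
`ℤ × ℤ` over `ℤ` (the monomial `t^i q^j` corresponds to the group element `(i,j)`). -/
abbrev TwoLaurent : Type := AddMonoidAlgebra ℤ (ℤ × ℤ)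

/-- The variable `t`. -/
def tVar : TwoLaurent := AddMonoidAlgebra.of' ℤ (ℤ × ℤ) (1, 0)

/-- The variable `q`. -/
def qVar : TwoLaurent := AddMonoidAlgebra.of' ℤ (ℤ × ℤ) (0, 1)

/-- The generators `c_{k,n} = (t;q)_k (q^{k+1};q)_{n−k}` of Habiro's ideal `I_n`. -/
def cElt (k n : ℕ) : TwoLaurent :=
  (∏ i ∈ Finset.range k, (1 - tVar * qVar ^ i)) *
    ∏ i ∈ Finset.range (n - k), (1 - qVar ^ (k + 1 + i))

/-- The `ℤ[q^{±1}]`-algebra map `φ̃_b : ℤ[t^{±1},q^{±1}] → ℤ[q^{±1}]`, `t ↦ q^b`,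
induced by the additive map `(i,j) ↦ b·i + j` on exponents. -/
def phiTilde (b : ℤ) : TwoLaurent →+* LaurentPolynomial ℤ :=
  AddMonoidAlgebra.mapDomainRingHom ℤ
    (b • (AddMonoidHom.fst ℤ ℤ) + AddMonoidHom.snd ℤ ℤ)

/-- `(q;q)_n` in `ℤ[q^{±1}]`. -/
def pochQ (n : ℕ) : LaurentPolynomial ℤ :=
  ∏ i ∈ Finset.range n, (1 - LaurentPolynomial.T ((i : ℤ) + 1))

open LaurentPolynomial


instance : IsDomain (LaurentPolynomial ℤ) := NoZeroDivisors.to_isDomain _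

/-- `(q^c; q)_m` in `ℤ[q^{±1}]`. -/
def pochS (c : ℤ) (m : ℕ) : LaurentPolynomial ℤ :=
  ∏ i ∈ Finset.range m, (1 - T (c + i))

lemma pochS_zero (c : ℤ) : pochS c 0 = 1 := Finset.prod_range_zero _

lemma pochS_succ (c : ℤ) (m : ℕ) :
    pochS c (m + 1) = pochS c m * (1 - T (c + m)) := Finset.prod_range_succ _ _

lemma pochS_succ' (c : ℤ) (m : ℕ) :
    pochS c (m + 1) = (1 - T c) * pochS (c + 1) m := by
  rw [pochS, Finset.prod_range_succ', mul_comm]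
  congr 1
  · norm_num
  · rw [pochS]
    apply Finset.prod_congr rfl
    intro i _
    congr 1
    push_cast
    ring

lemma pochS_add (c : ℤ) (k d : ℕ) : pochS c (k + d) = pochS c k * pochS (c + k) d := by
  rw [pochS, Finset.prod_range_add]
  congr 1
  apply Finset.prod_congr rfl
  intro i _
  congr 1
  push_cast
  ring

lemma pochS_eq_zero_of (c : ℤ) (m : ℕ) (hm : (-c).toNat < m) (hc : c ≤ 0) :
    pochS c m = 0 := by
  apply Finset.prod_eq_zero (Finset.mem_range.2 hm)
  have : c + ((-c).toNat : ℤ) = 0 := by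
    rw [Int.toNat_of_nonneg (by omega)]; ring
  rw [this, T_zero, sub_self]

lemma pochS_rec (c : ℤ) (m : ℕ) :
    pochS (c + 1) (m + 1) = pochS c (m + 1) + T c * (1 - T ((m : ℤ) + 1)) * pochS (c + 1) m := by
  rw [pochS_succ, pochS_succ']
  have h1 : (1 : LaurentPolynomial ℤ) - T (c + 1 + m) = (1 - T c) + T c * (1 - T ((m : ℤ) + 1)) := by
    rw [mul_sub, mul_one, ← T_add]
    have : c + ((m : ℤ) + 1) = c + 1 + m := by ring
    rw [this]; ring
  rw [h1]; ring

lemma pochS_one_dvd : ∀ (m : ℕ) (c : ℤ), pochS 1 m ∣ pochS c m := by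
  intro m
  induction m with
  | zero => intro c; simp [pochS_zero]
  | succ m ih =>
    have key : ∀ c : ℤ, pochS 1 (m + 1) ∣ T c * (1 - T ((m : ℤ) + 1)) * pochS (c + 1) m := by
      intro c
      rw [pochS_succ]
      have h2 : pochS 1 m * (1 - T (1 + m)) ∣ pochS (c + 1) m * (1 - T (1 + m)) :=
        mul_dvd_mul_right (ih (c + 1)) _
      refine h2.trans (Dvd.intro_left (T c) ?_)
      rw [show (1 : ℤ) + (m : ℤ) = (m : ℤ) + 1 by ring]
      ring
    intro c
    induction c using Int.induction_on with
    | zero =>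
      rw [pochS_eq_zero_of 0 (m + 1) (by simp) le_rfl]
      exact dvd_zero _
    | succ c ihc =>
      rw [pochS_rec]
      exact dvd_add ihc (key _)
    | pred c ihc =>
      have h := pochS_rec (-(c : ℤ) - 1) m
      rw [show -(c : ℤ) - 1 + 1 = -(c:ℤ) by ring] at h
      have heq : pochS (-(c:ℤ) - 1) (m + 1)
          = pochS (-(c:ℤ)) (m + 1) - T (-(c:ℤ) - 1) * (1 - T ((m : ℤ) + 1)) * pochS (-(c:ℤ)) m := by
        rw [h]; ring
      rw [show (-(c:ℤ) - 1 : ℤ) = -(c:ℤ) - 1 from rfl] at heq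
      rw [heq]
      refine dvd_sub ihc ?_
      have := key (-(c:ℤ) - 1)
      rwa [show -(c : ℤ) - 1 + 1 = -(c:ℤ) by ring] at this

lemma T_ne_one {j : ℤ} (hj : j ≠ 0) : (T j : LaurentPolynomial ℤ) ≠ 1 := by
  have key : ∀ m : ℕ, m ≠ 0 → (T (m:ℤ) : LaurentPolynomial ℤ) ≠ 1 := by
    intro m hm h
    have h1 : (Polynomial.X ^ m : Polynomial ℤ).toLaurent = ((1 : Polynomial ℤ)).toLaurent := by
      simpa using h
    have h2 := Polynomial.toLaurent_injective h1
    have h3 := congrArg (Polynomial.eval 0) h2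
    simp [zero_pow hm] at h3
  rcases lt_or_gt_of_ne hj with hneg | hpos
  · intro h
    have h2 : (T ((-j).toNat : ℤ) : LaurentPolynomial ℤ) = 1 := by
      have hmul : T (-j) * T j = (1 : LaurentPolynomial ℤ) := by rw [← T_add]; simp
      rw [h, mul_one] at hmul
      rwa [Int.toNat_of_nonneg (by omega)]
    exact key _ (by omega) h2
  · intro h
    have h2 : (T ((j).toNat : ℤ) : LaurentPolynomial ℤ) = 1 := by
      rwa [Int.toNat_of_nonneg (by omega)]
    exact key _ (by omega) h2

lemma one_sub_T_ne_zero (j : ℤ) (hj : j ≠ 0) : (1 - T j : LaurentPolynomial ℤ) ≠ 0 :=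
  sub_ne_zero_of_ne (Ne.symm (T_ne_one hj))

lemma pochS_one_ne_zero (m : ℕ) : pochS 1 m ≠ 0 := by
  rw [pochS]
  apply Finset.prod_ne_zero_iff.2
  intro i _
  exact one_sub_T_ne_zero _ (by omega)

lemma pochS_neg_self (m : ℕ) :
    ∃ u : (LaurentPolynomial ℤ)ˣ, pochS (-(m : ℤ)) m = (u : LaurentPolynomial ℤ) * pochS 1 m := by
  induction m with
  | zero => exact ⟨1, by simp [pochS_zero]⟩
  | succ m ih =>
    obtain ⟨u, hu⟩ := ih
    have hT : IsUnit (T (-(m:ℤ) - 1) : LaurentPolynomial ℤ) := isUnit_T _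
    refine ⟨u * (-hT.unit), ?_⟩
    have hval : ((u * (-hT.unit) : (LaurentPolynomial ℤ)ˣ) : LaurentPolynomial ℤ)
        = (u : LaurentPolynomial ℤ) * (-(T (-(m:ℤ) - 1))) := by
      simp [hT.unit_spec]
    rw [hval]
    rw [show (-((m+1 : ℕ) : ℤ)) = -(m:ℤ) - 1 by push_cast; ring]
    rw [pochS_succ' (-(m:ℤ) - 1) m, show -(m:ℤ) - 1 + 1 = -(m:ℤ) by ring, hu]
    have e2 : (1 : LaurentPolynomial ℤ) - T (-(m:ℤ) - 1)
        = (-(T (-(m:ℤ) - 1))) * (1 - T ((m : ℤ) + 1)) := by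
      rw [neg_mul, mul_sub, mul_one, ← T_add,
        show -(m:ℤ) - 1 + ((m:ℤ)+1) = 0 by ring, T_zero]
      ring
    rw [e2, pochS_succ 1 m, show (1:ℤ) + (m:ℤ) = (m:ℤ)+1 by push_cast; ring]
    ring

-- new defs
def tInv : TwoLaurent := AddMonoidAlgebra.of' ℤ (ℤ × ℤ) (-1, 0)
def iota : LaurentPolynomial ℤ →+* TwoLaurent :=
  AddMonoidAlgebra.mapDomainRingHom ℤ (AddMonoidHom.inr ℤ ℤ)
def tP (k : ℕ) : TwoLaurent := ∏ i ∈ Finset.range k, (1 - tVar * qVar ^ i)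
def Isp (n : ℕ) : Ideal TwoLaurent := Ideal.span {g : TwoLaurent | ∃ k ≤ n, g = cElt k n}


lemma single_mul_single' (a b : ℤ × ℤ) (c d : ℤ) :
    (AddMonoidAlgebra.single a c : TwoLaurent) * AddMonoidAlgebra.single b d
      = AddMonoidAlgebra.single (a + b) (c * d) :=
  AddMonoidAlgebra.single_mul_single a b c d

lemma one_def' : (1 : TwoLaurent) = AddMonoidAlgebra.single ((0,0) : ℤ × ℤ) 1 := rfl

lemma tVar_mul_tInv : tVar * tInv = 1 := by
  show (AddMonoidAlgebra.single ((1,0) : ℤ×ℤ) 1 : TwoLaurent) * AddMonoidAlgebra.single (-1,0) 1 = 1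
  rw [single_mul_single', one_def']
  norm_num

lemma qVar_pow (i : ℕ) : qVar ^ i = (AddMonoidAlgebra.single ((0, (i:ℤ)) : ℤ × ℤ) 1 : TwoLaurent) := by
  show (AddMonoidAlgebra.single ((0,1) : ℤ×ℤ) (1:ℤ) : TwoLaurent) ^ i = _
  rw [AddMonoidAlgebra.single_pow]
  norm_num

lemma iota_T (j : ℤ) : iota (T j) = (AddMonoidAlgebra.single ((0, j) : ℤ × ℤ) 1 : TwoLaurent) := by
  show AddMonoidAlgebra.mapDomain _ (AddMonoidAlgebra.single j 1) = _
  rw [AddMonoidAlgebra.mapDomain_single]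
  rfl

lemma iota_T_nat (i : ℕ) : iota (T (i : ℤ)) = qVar ^ i := by
  rw [iota_T, qVar_pow]

lemma qVar_pow_mul_iota_T_neg (k : ℕ) : qVar ^ k * iota (T (-(k:ℤ))) = 1 := by
  rw [qVar_pow, iota_T, single_mul_single', one_def']
  norm_num

lemma phiTilde_single (b : ℤ) (p : ℤ × ℤ) (c : ℤ) :
    phiTilde b (AddMonoidAlgebra.single p c) = AddMonoidAlgebra.single (b * p.1 + p.2) c := by
  show AddMonoidAlgebra.mapDomain _ _ = _
  rw [AddMonoidAlgebra.mapDomain_single]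
  rfl

lemma phiTilde_iota (b : ℤ) (u : LaurentPolynomial ℤ) : phiTilde b (iota u) = u := by
  show AddMonoidAlgebra.mapDomain (fun p : ℤ × ℤ => b * p.1 + p.2)
      (AddMonoidAlgebra.mapDomain (fun j : ℤ => ((0, j) : ℤ × ℤ)) u) = u
  induction u using AddMonoidAlgebra.induction_linear with
  | zero => simp
  | add x y hx hy => rw [AddMonoidAlgebra.mapDomain_add, AddMonoidAlgebra.mapDomain_add, hx, hy]
  | single m r =>
    rw [AddMonoidAlgebra.mapDomain_single, AddMonoidAlgebra.mapDomain_single]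
    simp only [mul_zero, zero_add]

lemma phiTilde_factor (b : ℤ) (i : ℕ) :
    phiTilde b (1 - tVar * qVar ^ i) = 1 - T (b + i) := by
  have h1 : tVar * qVar ^ i = (AddMonoidAlgebra.single ((1, (i:ℤ)) : ℤ × ℤ) 1 : TwoLaurent) := by
    rw [qVar_pow]
    show (AddMonoidAlgebra.single ((1,0) : ℤ×ℤ) (1:ℤ) : TwoLaurent) * _ = _
    rw [single_mul_single']
    norm_num
  rw [map_sub, map_one, h1, phiTilde_single]
  congr 1
  show AddMonoidAlgebra.single (b * 1 + (i:ℤ)) 1 = AddMonoidAlgebra.single (b + (i:ℤ)) (1:ℤ)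
  rw [mul_one]

lemma phiTilde_tP (b : ℤ) (k : ℕ) : phiTilde b (tP k) = pochS b k := by
  rw [tP, map_prod, pochS]
  exact Finset.prod_congr rfl fun i _ => phiTilde_factor b i

lemma cElt_eq (k n : ℕ) : cElt k n = tP k * iota (pochS ((k:ℤ) + 1) (n - k)) := by
  rw [cElt, tP, pochS, map_prod]
  congr 1
  apply Finset.prod_congr rfl
  intro i _
  rw [map_sub, map_one]
  congr 1
  rw [show (k:ℤ) + 1 + (i:ℤ) = ((k + 1 + i : ℕ) : ℤ) by push_cast; ring, iota_T_nat]

lemma tP_mem (n : ℕ) : tP n ∈ Isp n := by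
  apply Ideal.subset_span
  exact ⟨n, le_rfl, by simp [cElt, tP]⟩

lemma tP_succ (k : ℕ) : tP (k + 1) = tP k * (1 - tVar * qVar ^ k) := Finset.prod_range_succ _ _

lemma tVar_mul_tP (k : ℕ) : tVar * tP k = iota (T (-(k:ℤ))) * (tP k - tP (k + 1)) := by
  have h2 : tP k - tP (k+1) = tP k * (tVar * qVar ^ k) := by rw [tP_succ]; ring
  rw [h2]
  calc tVar * tP k = (qVar ^ k * iota (T (-(k:ℤ)))) * (tVar * tP k) := by
        rw [qVar_pow_mul_iota_T_neg, one_mul]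
    _ = iota (T (-(k:ℤ))) * (tP k * (tVar * qVar ^ k)) := by ring

lemma tInv_mul_tP_succ (k : ℕ) : tInv * tP (k + 1) = tInv * tP k - qVar ^ k * tP k := by
  rw [tP_succ]
  have h : tInv * tVar = 1 := by rw [mul_comm]; exact tVar_mul_tInv
  calc tInv * (tP k * (1 - tVar * qVar ^ k))
      = tInv * tP k - (tInv * tVar) * (qVar ^ k * tP k) := by ring
    _ = tInv * tP k - qVar ^ k * tP k := by rw [h, one_mul]

def HasRep (n : ℕ) (f : TwoLaurent) : Prop :=
  ∃ a : ℕ → LaurentPolynomial ℤ,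
    f - ∑ k ∈ Finset.range n, iota (a k) * tP k ∈ Isp n

lemma hasRep_of_mem {n : ℕ} {f : TwoLaurent} (hf : f ∈ Isp n) : HasRep n f :=
  ⟨fun _ => 0, by simpa using hf⟩

lemma hasRep_zero (n : ℕ) : HasRep n 0 :=
  hasRep_of_mem (Ideal.zero_mem _)

lemma hasRep_add {n : ℕ} {f g : TwoLaurent} (hf : HasRep n f) (hg : HasRep n g) :
    HasRep n (f + g) := by
  obtain ⟨a, ha⟩ := hf
  obtain ⟨b, hb⟩ := hg
  refine ⟨fun k => a k + b k, ?_⟩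
  have h2 : ∑ k ∈ Finset.range n, iota (a k + b k) * tP k
      = (∑ k ∈ Finset.range n, iota (a k) * tP k)
        + ∑ k ∈ Finset.range n, iota (b k) * tP k := by
    rw [← Finset.sum_add_distrib]
    apply Finset.sum_congr rfl
    intro k _
    rw [map_add]; ring
  have h3 : f + g - ∑ k ∈ Finset.range n, iota (a k + b k) * tP k
      = (f - ∑ k ∈ Finset.range n, iota (a k) * tP k)
        + (g - ∑ k ∈ Finset.range n, iota (b k) * tP k) := by
    rw [h2]; ring
  rw [h3]
  exact Ideal.add_mem _ ha hb
lemma hasRep_iotaMul {n : ℕ} {f : TwoLaurent} (u : LaurentPolynomial ℤ) (hf : HasRep n f) :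
    HasRep n (iota u * f) := by
  obtain ⟨a, ha⟩ := hf
  refine ⟨fun k => u * a k, ?_⟩
  have : iota u * f - ∑ k ∈ Finset.range n, iota (u * a k) * tP k
      = iota u * (f - ∑ k ∈ Finset.range n, iota (a k) * tP k) := by
    rw [mul_sub, Finset.mul_sum]
    congr 1
    apply Finset.sum_congr rfl
    intro k _
    rw [map_mul]; ring
  rw [this]
  exact Ideal.mul_mem_left _ _ ha

lemma hasRep_tP {n k : ℕ} (hk : k < n) : HasRep n (tP k) := by
  refine ⟨fun j => if j = k then 1 else 0, ?_⟩
  have : ∑ j ∈ Finset.range n, iota (if j = k then 1 else 0) * tP j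
      = ∑ j ∈ Finset.range n, if j = k then tP j else 0 := by
    apply Finset.sum_congr rfl
    intro j _
    split <;> simp
  rw [this, Finset.sum_ite_eq' (Finset.range n) k tP, if_pos (Finset.mem_range.2 hk), sub_self]
  exact Ideal.zero_mem _

lemma hasRep_sum {n : ℕ} {ι : Type*} (s : Finset ι) (F : ι → TwoLaurent)
    (h : ∀ i ∈ s, HasRep n (F i)) : HasRep n (∑ i ∈ s, F i) :=
  Finset.sum_induction F (HasRep n) (fun _ _ ha hb => hasRep_add ha hb) (hasRep_zero n) h

lemma hasRep_neg {n : ℕ} {f : TwoLaurent} (hf : HasRep n f) : HasRep n (-f) := by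
  have h : iota (-1 : LaurentPolynomial ℤ) = -1 := by rw [map_neg, map_one]
  have := hasRep_iotaMul (-1) hf
  rwa [h, neg_one_mul] at this

lemma hasRep_sub {n : ℕ} {f g : TwoLaurent} (hf : HasRep n f) (hg : HasRep n g) :
    HasRep n (f - g) := by
  rw [sub_eq_add_neg]
  exact hasRep_add hf (hasRep_neg hg)

lemma hasRep_mul_left {n : ℕ} (x : TwoLaurent) (hx : ∀ k, k < n → HasRep n (x * tP k))
    {f : TwoLaurent} (hf : HasRep n f) : HasRep n (x * f) := by
  obtain ⟨a, ha⟩ := hf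
  have h2 : ∑ k ∈ Finset.range n, iota (a k) * (x * tP k)
      = x * ∑ k ∈ Finset.range n, iota (a k) * tP k := by
    rw [Finset.mul_sum]
    apply Finset.sum_congr rfl
    intro k _
    ring
  have hxf : x * f = x * (f - ∑ k ∈ Finset.range n, iota (a k) * tP k)
      + ∑ k ∈ Finset.range n, iota (a k) * (x * tP k) := by
    rw [h2]; ring
  rw [hxf]
  exact hasRep_add (hasRep_of_mem (Ideal.mul_mem_left _ _ ha))
    (hasRep_sum _ _ fun k hk => hasRep_iotaMul _ (hx k (Finset.mem_range.1 hk)))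

lemma hasRep_one (n : ℕ) : HasRep n 1 := by
  cases n with
  | zero =>
    apply hasRep_of_mem
    apply Ideal.subset_span
    exact ⟨0, le_rfl, by simp [cElt]⟩
  | succ m =>
    have h : tP 0 = 1 := Finset.prod_range_zero _
    rw [← h]
    exact hasRep_tP (Nat.succ_pos m)

lemma hasRep_tVar_mul_tP {n k : ℕ} (hk : k < n) : HasRep n (tVar * tP k) := by
  rw [tVar_mul_tP]
  apply hasRep_iotaMul
  apply hasRep_sub (hasRep_tP hk)
  rcases eq_or_lt_of_le (Nat.succ_le_of_lt hk) with h | h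
  · rw [show k + 1 = n from h]
    exact hasRep_of_mem (tP_mem n)
  · exact hasRep_tP h

lemma hasRep_tInv_mul_tP (n : ℕ) : ∀ d k, k + d = n → HasRep n (tInv * tP k) := by
  intro d
  induction d with
  | zero =>
    intro k hk
    rw [Nat.add_zero] at hk
    subst hk
    exact hasRep_of_mem (Ideal.mul_mem_left _ _ (tP_mem k))
  | succ d ih =>
    intro k hk
    have h1 : tInv * tP k = tInv * tP (k + 1) + qVar ^ k * tP k := by
      rw [tInv_mul_tP_succ]; ring
    rw [h1]
    refine hasRep_add (ih (k + 1) (by omega)) ?_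
    rw [← iota_T_nat]
    exact hasRep_iotaMul _ (hasRep_tP (by omega))

lemma hasRep_tVar_mul {n : ℕ} {f : TwoLaurent} (hf : HasRep n f) : HasRep n (tVar * f) :=
  hasRep_mul_left tVar (fun _ hk => hasRep_tVar_mul_tP hk) hf

lemma hasRep_tInv_mul {n : ℕ} {f : TwoLaurent} (hf : HasRep n f) : HasRep n (tInv * f) :=
  hasRep_mul_left tInv (fun k hk => hasRep_tInv_mul_tP n (n - k) k (by omega)) hf

lemma hasRep_of'T (n : ℕ) : ∀ i : ℤ, HasRep n (AddMonoidAlgebra.single ((i, 0) : ℤ × ℤ) 1) := by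
  intro i
  induction i using Int.induction_on with
  | zero => rw [← one_def']; exact hasRep_one n
  | succ i ih =>
    have h : (AddMonoidAlgebra.single (((i : ℤ) + 1, 0) : ℤ × ℤ) 1 : TwoLaurent)
        = tVar * AddMonoidAlgebra.single (((i : ℤ), 0) : ℤ × ℤ) 1 := by
      show _ = (AddMonoidAlgebra.single ((1,0) : ℤ×ℤ) (1:ℤ) : TwoLaurent) * _
      rw [single_mul_single', Prod.mk_add_mk]
      norm_num [add_comm]
    rw [h]
    exact hasRep_tVar_mul ih
  | pred i ih =>
    have h : (AddMonoidAlgebra.single ((-(i : ℤ) - 1, 0) : ℤ × ℤ) 1 : TwoLaurent)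
        = tInv * AddMonoidAlgebra.single ((-(i : ℤ), 0) : ℤ × ℤ) 1 := by
      show _ = (AddMonoidAlgebra.single ((-1,0) : ℤ×ℤ) (1:ℤ) : TwoLaurent) * _
      rw [single_mul_single', Prod.mk_add_mk]
      norm_num [add_comm, sub_eq_add_neg]
    rw [h]
    exact hasRep_tInv_mul ih

lemma hasRep_all (n : ℕ) (f : TwoLaurent) : HasRep n f := by
  induction f using AddMonoidAlgebra.induction with
  | zero => exact hasRep_zero n
  | single_add p c f hp hc ih =>
    refine hasRep_add ?_ ih
    obtain ⟨i, j⟩ := p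
    have h : (AddMonoidAlgebra.single ((i, j) : ℤ × ℤ) c : TwoLaurent)
        = iota (AddMonoidAlgebra.single j c) * AddMonoidAlgebra.single ((i, 0) : ℤ × ℤ) 1 := by
      have h1 : iota (AddMonoidAlgebra.single j c) = (AddMonoidAlgebra.single ((0, j) : ℤ × ℤ) c : TwoLaurent) := by
        show AddMonoidAlgebra.mapDomain _ _ = _
        rw [AddMonoidAlgebra.mapDomain_single]
        rfl
      rw [h1, single_mul_single']
      norm_num
    have := hasRep_iotaMul (AddMonoidAlgebra.single j c) (hasRep_of'T n i)
    rw [← h] at this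
    exact this

lemma pochQ_eq (n : ℕ) : pochQ n = pochS 1 n := by
  rw [pochQ, pochS]
  apply Finset.prod_congr rfl
  intro i _
  rw [add_comm]

lemma pochS_one_split (k n : ℕ) (hk : k ≤ n) :
    pochS 1 n = pochS 1 k * pochS ((k:ℤ) + 1) (n - k) := by
  have h := pochS_add 1 k (n - k)
  rw [Nat.add_sub_cancel' hk] at h
  rw [h, add_comm (1:ℤ) (k:ℤ)]

lemma dvd_of_mem {n : ℕ} {f : TwoLaurent} (hf : f ∈ Isp n) (b : ℤ) :
    pochS 1 n ∣ phiTilde b f := by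
  induction hf using Submodule.span_induction with
  | mem x hx =>
    obtain ⟨k, hk, rfl⟩ := hx
    rw [cElt_eq, map_mul, phiTilde_tP, phiTilde_iota, pochS_one_split k n hk]
    exact mul_dvd_mul (pochS_one_dvd k b) dvd_rfl
  | zero => simp
  | add x y _ _ hx hy => rw [map_add]; exact dvd_add hx hy
  | smul r x _ hx => rw [smul_eq_mul, map_mul]; exact Dvd.dvd.mul_left hx _

lemma coeff_dvd (n : ℕ) (a : ℕ → LaurentPolynomial ℤ)
    (hdvd : ∀ b : ℤ, pochS 1 n ∣ ∑ k ∈ Finset.range n, a k * pochS b k) :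
    ∀ m, m < n → pochS ((m:ℤ) + 1) (n - m) ∣ a m := by
  intro m
  induction m using Nat.strong_induction_on with
  | _ m ih =>
  intro hm
  have hD := hdvd (-(m:ℤ))
  have h1 : pochS 1 n ∣ a m * pochS (-(m:ℤ)) m := by
    have hsub : a m * pochS (-(m:ℤ)) m
        = (∑ k ∈ Finset.range n, a k * pochS (-(m:ℤ)) k)
          - ∑ k ∈ (Finset.range n).erase m, a k * pochS (-(m:ℤ)) k := by
      rw [← Finset.add_sum_erase _ _ (Finset.mem_range.2 hm)]
      ring
    rw [hsub]
    refine dvd_sub hD (Finset.dvd_sum ?_)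
    intro k hk
    have hkn : k < n := Finset.mem_range.1 (Finset.mem_of_mem_erase hk)
    have hkm : k ≠ m := Finset.ne_of_mem_erase hk
    rcases lt_or_gt_of_ne hkm with h | h
    · have h2 := ih k h hkn
      rw [pochS_one_split k n (le_of_lt hkn)]
      have h3 := mul_dvd_mul (pochS_one_dvd k (-(m:ℤ))) h2
      rw [mul_comm (a k)]
      exact h3
    · have hz : pochS (-(m:ℤ)) k = 0 := pochS_eq_zero_of (-(m:ℤ)) k (by omega) (by omega)
      rw [hz, mul_zero]
      exact dvd_zero _
  obtain ⟨u, hu⟩ := pochS_neg_self m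
  rw [hu, pochS_one_split m n (le_of_lt hm)] at h1
  have h2 : pochS 1 m * pochS ((m:ℤ) + 1) (n - m) ∣ pochS 1 m * ((u : LaurentPolynomial ℤ) * a m) := by
    have he : a m * ((u : LaurentPolynomial ℤ) * pochS 1 m)
        = pochS 1 m * ((u : LaurentPolynomial ℤ) * a m) := by ring
    rwa [he] at h1
  have h3 := (mul_dvd_mul_iff_left (pochS_one_ne_zero m)).1 h2
  have h4 := h3.mul_left ((u⁻¹ : (LaurentPolynomial ℤ)ˣ) : LaurentPolynomial ℤ)
  rwa [← mul_assoc, Units.inv_mul, one_mul] at h4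


/-- Let `n ≥ 0` and `f ∈ ℤ[t^{±1},q^{±1}]`.  Then `φ̃_b(f)` is divisible by
`(q;q)_n` in `ℤ[q^{±1}]` for every integer `b` if and only if `f` belongs to the ideal `I_n`
generated by `c_{k,n} = (t;q)_k (q^{k+1};q)_{n−k}`, `k = 0, 1, …, n`. -/
theorem habiro_ideal_characterization (n : ℕ) (f : TwoLaurent) :
    (∀ b : ℤ, pochQ n ∣ phiTilde b f) ↔
      f ∈ Ideal.span {g : TwoLaurent | ∃ k ≤ n, g = cElt k n} := by
  have hIsp : Ideal.span {g : TwoLaurent | ∃ k ≤ n, g = cElt k n} = Isp n := rfl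
  rw [hIsp]
  constructor
  · intro hdvd
    obtain ⟨a, hmem⟩ := hasRep_all n f
    set S := ∑ k ∈ Finset.range n, iota (a k) * tP k with hS
    have hdvdS : ∀ b : ℤ, pochS 1 n ∣ ∑ k ∈ Finset.range n, a k * pochS b k := by
      intro b
      have h1 : pochS 1 n ∣ phiTilde b (f - S) := dvd_of_mem hmem b
      have h2 : phiTilde b S = ∑ k ∈ Finset.range n, a k * pochS b k := by
        rw [hS, map_sum]
        apply Finset.sum_congr rfl
        intro k _
        rw [map_mul, phiTilde_iota, phiTilde_tP]
      have h3 : ∑ k ∈ Finset.range n, a k * pochS b k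
          = phiTilde b f - phiTilde b (f - S) := by
        rw [← h2, map_sub]
        ring
      rw [h3]
      exact dvd_sub (pochQ_eq n ▸ hdvd b) h1
    have hcoef := coeff_dvd n a hdvdS
    have hSmem : S ∈ Isp n := by
      apply Ideal.sum_mem
      intro k hk
      obtain ⟨v, hv⟩ := hcoef k (Finset.mem_range.1 hk)
      have heq : iota (a k) * tP k = iota v * cElt k n := by
        rw [cElt_eq, hv, map_mul]
        ring
      rw [heq]
      exact Ideal.mul_mem_left _ _
        (Ideal.subset_span ⟨k, le_of_lt (Finset.mem_range.1 hk), rfl⟩)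
    have hf : f = (f - S) + S := by ring
    rw [hf]
    exact Ideal.add_mem _ hmem hSmem
  · intro hmem b
    rw [pochQ_eq]
    exact dvd_of_mem hmem b

end
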